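/- Let w, n, r, ρ, C be positive real numbers and let ξ, s, σ, a be reals with 0 < ξ < C. Set μ = C/r and μ_A = ξ/ρ and assume: (i) μ_A < μ; (ii) n(μ − μ_A) ≥ 1/(rρ); (iii) a(μ − μ_A) = (σ/ρ)μ − (s/r)μ_A; (iv) ξ² − 2wρσ ≥ 0. Then a < max{ nC³/(2rw), nC³/(2rw) − nsC }. -/

import Mathlib

theorem stmt14 (w n r ρ C ξ s σ a : ℝ)
    (hw : 0 < w) (hn : 0 < n) (hr : 0 < r) (hρ : 0 < ρ) (hC : 0 < C)
    (hξ0 : 0 < ξ) (hξC : ξ < C)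
    (μ μA : ℝ) (hμ : μ = C / r) (hμA : μA = ξ / ρ)
    (h1 : μA < μ)
    (h2 : n * (μ - μA) ≥ 1 / (r * ρ))
    (h3 : a * (μ - μA) = σ / ρ * μ - s / r * μA)
    (h4 : ξ ^ 2 - 2 * w * ρ * σ ≥ 0) :
    a < max (n * C ^ 3 / (2 * r * w)) (n * C ^ 3 / (2 * r * w) - n * s * C) := by
  subst hμ hμA
  have hr' := hr.ne'
  have hρ' := hρ.ne'
  have hD : C * ρ - ξ * r > 0 := by
    rw [div_lt_div_iff₀ hρ hr] at h1; linarith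
  field_simp at h2 h3
  -- h2 : 1 / (r * ρ) ≤ n * (C * ρ - r * ξ) / (r * ρ)
  -- h3 : a * (C * ρ - r * ξ) * (ρ * r * (r * ρ)) = (σ * C * (r * ρ) - ρ * r * (s * ξ)) * (r * ρ)
  have h2' : 1 ≤ n * (C * ρ - ξ * r) := by
    have := h2
    linarith [this]
  have h3' : a * (C * ρ - ξ * r) = σ * C - s * ξ := by
    have hne : (ρ * r * (r * ρ)) ≠ 0 := by positivity
    apply mul_right_cancel₀ hne
    linear_combination (ρ * r * (r * ρ)) * h3
  have h3'' : 2 * w * r * ρ * (a * (C * ρ - ξ * r)) = 2 * w * r * ρ * (σ * C - s * ξ) := by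
    rw [h3']
  have H4r : (ξ ^ 2 - 2 * w * ρ * σ) * (C * r) ≥ 0 :=
    mul_nonneg h4 (by positivity)
  have hB : ξ ^ 2 * C * r < C ^ 3 * ρ := by
    nlinarith [mul_pos hC (mul_pos hC hD),
      mul_pos (mul_pos hC (mul_pos hξ0 hr)) (sub_pos.2 hξC)]
  have hC2 : C ^ 3 * ρ ≤ n * C ^ 3 * ρ * (C * ρ - ξ * r) := by
    nlinarith [mul_le_mul_of_nonneg_left h2' (by positivity : (0:ℝ) ≤ C ^ 3 * ρ)]
  have hpos : 0 < ρ * (C * ρ - ξ * r) := mul_pos hρ hD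
  rcases le_or_gt s 0 with hs | hs
  · refine lt_max_of_lt_right ?_
    rw [lt_sub_iff_add_lt, lt_div_iff₀ (by positivity)]
    have hc : 2 * r * w * C * ρ * s ≤ 0 := by
      nlinarith [mul_nonneg (by positivity : (0:ℝ) ≤ 2 * r * w * C * ρ) (neg_nonneg.2 hs)]
    have hint1 := mul_le_mul_of_nonpos_left h2' hc
    have hint2 : 0 ≤ 2 * r * w * ρ * (-s) * (C - ξ) :=
      mul_nonneg (mul_nonneg (by positivity) (neg_nonneg.2 hs)) (sub_nonneg.2 hξC.le)
    have key : (a + n * s * C) * (2 * r * w) * (ρ * (C * ρ - ξ * r))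
        < n * C ^ 3 * (ρ * (C * ρ - ξ * r)) := by
      nlinarith [h3'', H4r, hB, hC2, hint1, hint2]
    exact lt_of_mul_lt_mul_right (by linarith [key]) hpos.le
  · refine lt_max_of_lt_left ?_
    rw [lt_div_iff₀ (by positivity)]
    have key : a * (2 * r * w) * (ρ * (C * ρ - ξ * r)) < n * C ^ 3 * (ρ * (C * ρ - ξ * r)) := by
      nlinarith [h3'', H4r, hB, hC2,
        mul_pos (mul_pos hs hξ0) (by positivity : (0:ℝ) < 2 * w * r * ρ)]
    exact lt_of_mul_lt_mul_right (by linarith [key]) hpos.le
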